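/- arXiv:2602.19464 — 2 statements merged into one kernel-verified Lean document; each statement's English description precedes it below -/
import Mathlib

section
/- Let k ≥ t+2, s ∈ [t+2, k], and n ≥ L(k,t) = (t+1) + (k-t+1)·log₂((t+1)(k-t+1)). Let h(s,k,t,n) be the number of k-partitions F of [n] with |F ∩ M| ≥ t, where M is the partition consisting of s fixed singletons {1},...,{s} of [n]. Then h(s,k,t,n) ≥ (1/6)·C(s,t)·S(n-t, k-t). -/
/-- Stirling number of the second kind. -/
def stirling : ℕ → ℕ → ℕ
  | 0, 0 => 1
  | 0, _ + 1 => 0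
  | _ + 1, 0 => 0
  | n + 1, k + 1 => stirling n k + (k + 1) * stirling n (k + 1)

/-- `P` is a partition of `[n]` into `k` pairwise disjoint nonempty blocks. -/
def IsKPartition (n k : ℕ) (P : Finset (Finset (Fin n))) : Prop :=
  P.card = k ∧ (∀ B ∈ P, B.Nonempty) ∧
    (∀ B ∈ P, ∀ C ∈ P, B ≠ C → Disjoint B C) ∧ P.sup id = Finset.univ

/-- `L(k,t) = (t+1) + (k-t+1)·log₂((t+1)(k-t+1))`. -/
noncomputable def Lfun (k t : ℕ) : ℝ :=
  ((t : ℝ) + 1) + ((k : ℝ) - t + 1) * Real.logb 2 (((t : ℝ) + 1) * ((k : ℝ) - t + 1))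




lemma sum_descFactorial_stirling (j : ℕ) : ∀ m : ℕ,
    ∑ i ∈ Finset.range (j+1), j.descFactorial i * stirling m i = j ^ m := by
  intro m
  induction m with
  | zero =>
    rw [Finset.sum_eq_single 0]
    · simp [stirling]
    · rintro (_|b) hb hb0
      · omega
      · simp [stirling]
    · intro h; simp at h
  | succ m ih =>
    have h1 : ∑ i ∈ Finset.range (j+1), j.descFactorial i * stirling (m+1) i
        = ∑ i ∈ Finset.range j, j.descFactorial (i+1) * stirling (m+1) (i+1) := by
      rw [Finset.sum_range_succ']
      simp [stirling]
    have h2 : ∀ i, j.descFactorial (i+1) * stirling (m+1) (i+1)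
        = j.descFactorial (i+1) * stirling m i
          + j.descFactorial (i+1) * ((i+1) * stirling m (i+1)) := by
      intro i
      show j.descFactorial (i+1) * (stirling m i + (i+1) * stirling m (i+1)) = _
      ring
    have hA : ∑ i ∈ Finset.range j, j.descFactorial (i+1) * stirling m i
        = ∑ i ∈ Finset.range (j+1), j.descFactorial (i+1) * stirling m i := by
      rw [Finset.sum_range_succ]
      have : j.descFactorial (j+1) = 0 := Nat.descFactorial_eq_zero_iff_lt.mpr (by omega)
      simp [this]
    have hB : ∑ i ∈ Finset.range j, j.descFactorial (i+1) * ((i+1) * stirling m (i+1))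
        = ∑ i ∈ Finset.range (j+1), j.descFactorial i * (i * stirling m i) := by
      rw [Finset.sum_range_succ']
      simp
    rw [h1]
    simp only [h2]
    rw [Finset.sum_add_distrib, hA, hB, ← Finset.sum_add_distrib]
    have h3 : ∀ i ∈ Finset.range (j+1),
        j.descFactorial (i+1) * stirling m i + j.descFactorial i * (i * stirling m i)
          = j * (j.descFactorial i * stirling m i) := by
      intro i hi
      rw [Finset.mem_range] at hi
      rw [Nat.descFactorial_succ]
      have : (j - i) + i = j := by omega
      calc (j - i) * j.descFactorial i * stirling m i + j.descFactorial i * (i * stirling m i)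
          = ((j-i) + i) * (j.descFactorial i * stirling m i) := by ring
        _ = j * (j.descFactorial i * stirling m i) := by rw [this]
    rw [Finset.sum_congr rfl h3, ← Finset.mul_sum, ih]
    ring

lemma factorial_mul_stirling_le (j m : ℕ) : j.factorial * stirling m j ≤ j ^ m := by
  have := sum_descFactorial_stirling j m
  rw [← this]
  have h := Finset.single_le_sum (f := fun i => j.descFactorial i * stirling m i)
    (fun i _ => Nat.zero_le _) (Finset.self_mem_range_succ j)
  simpa [Nat.descFactorial_self] using h


lemma poly_ineq (j : ℕ) (hj : 2 ≤ j) : 6^7 * (2*j-1)^7 ≤ 5^7 * (j+1)^10 := by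
  rcases le_or_gt j 6 with h | h
  · interval_cases j <;> norm_num
  · have h1 : (2*j-1)^7 ≤ 128 * (j+1)^7 := by
      calc (2*j-1)^7 ≤ (2*(j+1))^7 := Nat.pow_le_pow_left (by omega) 7
        _ = 128 * (j+1)^7 := by ring
    have h2 : (512 : ℕ) ≤ (j+1)^3 := by
      calc (512:ℕ) = 8^3 := by norm_num
        _ ≤ (j+1)^3 := Nat.pow_le_pow_left (by omega) 3
    calc 6^7 * (2*j-1)^7 ≤ 6^7 * (128 * (j+1)^7) := Nat.mul_le_mul_left _ h1
      _ = (6^7*128) * (j+1)^7 := by ring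
      _ ≤ (5^7 * 512) * (j+1)^7 := Nat.mul_le_mul_right _ (by norm_num)
      _ = 5^7 * (512 * (j+1)^7) := by ring
      _ ≤ 5^7 * ((j+1)^3 * (j+1)^7) := Nat.mul_le_mul_left _ (Nat.mul_le_mul_right _ h2)
      _ = 5^7 * (j+1)^10 := by ring

open Real in
lemma real_key (j M : ℕ) (hj : 2 ≤ j)
    (hM : ((j:ℝ)+1) * Real.logb 2 ((j:ℝ)+1) ≤ M) :
    6*(2*(j:ℝ)-1) * ((j:ℝ)-1)^M ≤ 5 * (j:ℝ)^M := by
  set x : ℝ := (j : ℝ) with hxdef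
  have hx : (2:ℝ) ≤ x := by rw [hxdef]; exact_mod_cast hj
  have hx0 : (0:ℝ) < x := by linarith
  have hx1 : (0:ℝ) ≤ x - 1 := by linarith
  have hlog2pos : (0:ℝ) < Real.log 2 := Real.log_pos (by norm_num)
  have hlogx1 : (0:ℝ) ≤ Real.log (x+1) := Real.log_nonneg (by linarith)
  -- step 1: (x-1)^M = ((x-1)/x)^M * x^M
  have hsplit : (x-1)^M = ((x-1)/x)^M * x^M := by
    rw [div_pow, div_mul_cancel₀]
    positivity
  -- step 2: ((x-1)/x)^M ≤ exp (-(M/x))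
  have hexp1 : (x-1)/x ≤ Real.exp (-(1/x)) := by
    have := Real.add_one_le_exp (-(1/x))
    have heq : (x-1)/x = -(1/x) + 1 := by field_simp; ring
    rw [heq]; exact this
  have hfr : ((x-1)/x)^M ≤ Real.exp (-(M/x)) := by
    have h := pow_le_pow_left₀ (by positivity) hexp1 M
    calc ((x-1)/x)^M ≤ (Real.exp (-(1/x)))^M := h
      _ = Real.exp (M * (-(1/x))) := (Real.exp_nat_mul _ M).symm
      _ = Real.exp (-(M/x)) := by ring_nf
  -- step 3: 6(2x-1) ≤ 5 * exp (M/x)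
  have hMx : (10/7 : ℝ) * Real.log (x+1) ≤ (M:ℝ)/x := by
    have hml : (x+1) * (Real.log (x+1) / Real.log 2) ≤ M := by
      rwa [Real.logb] at hM
    have hln2 : Real.log 2 ≤ 0.7 := by
      have := Real.log_two_lt_d9
      linarith
    have h107 : (10/7:ℝ) * Real.log (x+1) ≤ Real.log (x+1) / Real.log 2 := by
      have hinv : (10/7:ℝ) ≤ (Real.log 2)⁻¹ := by
        rw [le_inv_comm₀ (by norm_num) hlog2pos]
        linarith
      calc (10/7:ℝ) * Real.log (x+1) ≤ (Real.log 2)⁻¹ * Real.log (x+1) :=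
            mul_le_mul_of_nonneg_right hinv hlogx1
        _ = Real.log (x+1) / Real.log 2 := by rw [div_eq_mul_inv]; ring
    have hxx1 : x ≤ x + 1 := by linarith
    have : x * ((10/7:ℝ) * Real.log (x+1)) ≤ (x+1) * (Real.log (x+1) / Real.log 2) := by
      calc x * ((10/7:ℝ) * Real.log (x+1)) ≤ x * (Real.log (x+1) / Real.log 2) := by
            apply mul_le_mul_of_nonneg_left h107 (le_of_lt hx0)
        _ ≤ (x+1) * (Real.log (x+1) / Real.log 2) := by
            apply mul_le_mul_of_nonneg_right hxx1 (by positivity)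
    rw [le_div_iff₀ hx0]
    nlinarith [this, hml]
  have hpow : 6*(2*x-1) ≤ 5 * (x+1) ^ (10/7 : ℝ) := by
    have ha : (0:ℝ) ≤ 6*(2*x-1) := by linarith
    have hb : (0:ℝ) ≤ 5 * (x+1) ^ (10/7 : ℝ) := by positivity
    apply le_of_pow_le_pow_left₀ (n := 7) (by norm_num) hb
    have hrw : (5 * (x+1) ^ (10/7 : ℝ))^(7:ℕ) = 5^(7:ℕ) * (x+1)^(10:ℕ) := by
      rw [mul_pow, ← Real.rpow_natCast ((x+1) ^ (10/7 : ℝ)) 7, ← Real.rpow_mul (by linarith)]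
      norm_num
    rw [hrw]
    have := poly_ineq j hj
    have hcast : ((6^7 * (2*j-1)^7 : ℕ) : ℝ) ≤ ((5^7 * (j+1)^10 : ℕ) : ℝ) := by
      exact_mod_cast this
    push_cast [show (1:ℕ) ≤ 2*j by omega] at hcast
    calc (6*(2*x-1))^(7:ℕ) = 6^7 * (2*x-1)^7 := by ring
      _ ≤ 5^7 * (x+1)^10 := by convert hcast using 2 <;> push_cast <;> ring
      _ = 5^(7:ℕ) * (x+1)^(10:ℕ) := by norm_num
  have hexp2 : 6*(2*x-1) ≤ 5 * Real.exp ((M:ℝ)/x) := by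
    have h1 : (x+1) ^ (10/7 : ℝ) = Real.exp ((10/7) * Real.log (x+1)) := by
      rw [Real.rpow_def_of_pos (by linarith), mul_comm]
    have h2 : Real.exp ((10/7) * Real.log (x+1)) ≤ Real.exp ((M:ℝ)/x) :=
      Real.exp_le_exp.mpr hMx
    calc 6*(2*x-1) ≤ 5 * (x+1) ^ (10/7:ℝ) := hpow
      _ = 5 * Real.exp ((10/7) * Real.log (x+1)) := by rw [h1]
      _ ≤ 5 * Real.exp ((M:ℝ)/x) := by linarith
  -- combine
  have hxM : (0:ℝ) < x ^ M := by positivity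
  calc 6*(2*x-1) * (x-1)^M = (6*(2*x-1)) * (((x-1)/x)^M * x^M) := by rw [hsplit]
    _ ≤ (6*(2*x-1)) * (Real.exp (-(M/x)) * x^M) := by
        apply mul_le_mul_of_nonneg_left _ (by linarith)
        apply mul_le_mul_of_nonneg_right hfr (le_of_lt hxM)
    _ ≤ (5 * Real.exp ((M:ℝ)/x)) * (Real.exp (-(M/x)) * x^M) := by
        apply mul_le_mul_of_nonneg_right hexp2
        positivity
    _ = 5 * (Real.exp ((M:ℝ)/x) * Real.exp (-(M/x))) * x^M := by ring
    _ = 5 * x^M := by rw [← Real.exp_add]; simp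

lemma nat_key (j M : ℕ) (hj : 2 ≤ j)
    (hM : ((j:ℝ)+1) * Real.logb 2 ((j:ℝ)+1) ≤ M) :
    6*(2*j-1)*(j-1)^M ≤ 5*j^M := by
  have := real_key j M hj hM
  have hcast : ((6*(2*j-1)*(j-1)^M : ℕ) : ℝ) ≤ ((5*j^M : ℕ) : ℝ) := by
    push_cast [show (1:ℕ) ≤ 2*j by omega, show (1:ℕ) ≤ j by omega]
    convert this using 2 <;> ring
  exact_mod_cast hcast


open Finset

section FunCount
variable {α : Type*} [Fintype α] [DecidableEq α] {j : ℕ}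

lemma card_subtype_ne_fin' (c : Fin j) :
    Fintype.card {d : Fin j // d ≠ c} = j - 1 := by
  have := Fintype.card_subtype_compl (· = c) (α := Fin j)
  simp only [Fintype.card_subtype_eq, Fintype.card_fin] at this
  exact this

lemma card_avoid_le' (hj2 : 2 ≤ j) (c : Fin j) :
    ((univ : Finset (α → Fin j)).filter fun f => ∀ x, f x ≠ c).card
      ≤ (j-1) ^ Fintype.card α := by
  obtain ⟨d₀, hd₀⟩ := Fintype.exists_ne_of_one_lt_card (by rw [Fintype.card_fin]; omega) c
  set Φ : (α → Fin j) → (α → {d : Fin j // d ≠ c}) := fun f x =>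
    if h : f x ≠ c then ⟨f x, h⟩ else ⟨d₀, hd₀⟩ with hΦ
  calc ((univ : Finset (α → Fin j)).filter fun f => ∀ x, f x ≠ c).card
      ≤ (univ : Finset (α → {d : Fin j // d ≠ c})).card := by
        apply Finset.card_le_card_of_injOn Φ (fun _ _ => mem_univ _)
        intro f hf g hg hfg
        rw [mem_coe, mem_filter] at hf hg
        funext x
        have := congrFun hfg x
        rw [hΦ] at this
        simp only [dif_pos (hf.2 x), dif_pos (hg.2 x)] at this
        exact congrArg Subtype.val this
    _ = (j-1) ^ Fintype.card α := by
        rw [card_univ, Fintype.card_fun, card_subtype_ne_fin' c]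

lemma card_aloneC_le' (hj2 : 2 ≤ j) (y : α) (c : Fin j) :
    ((univ : Finset (α → Fin j)).filter fun f => f y = c ∧ ∀ x, x ≠ y → f x ≠ c).card
      ≤ (j-1) ^ (Fintype.card α - 1) := by
  obtain ⟨d₀, hd₀⟩ := Fintype.exists_ne_of_one_lt_card (by rw [Fintype.card_fin]; omega) c
  set Φ : (α → Fin j) → ({x : α // x ≠ y} → {d : Fin j // d ≠ c}) := fun f x =>
    if h : f x.1 ≠ c then ⟨f x.1, h⟩ else ⟨d₀, hd₀⟩ with hΦ
  calc ((univ : Finset (α → Fin j)).filter fun f => f y = c ∧ ∀ x, x ≠ y → f x ≠ c).card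
      ≤ (univ : Finset ({x : α // x ≠ y} → {d : Fin j // d ≠ c})).card := by
        apply Finset.card_le_card_of_injOn Φ (fun _ _ => mem_univ _)
        intro f hf g hg hfg
        rw [mem_coe, mem_filter] at hf hg
        funext x
        by_cases hx : x = y
        · rw [hx, hf.2.1, hg.2.1]
        · have := congrFun hfg ⟨x, hx⟩
          rw [hΦ] at this
          simp only [dif_pos (hf.2.2 x hx), dif_pos (hg.2.2 x hx)] at this
          exact congrArg Subtype.val this
    _ = (j-1) ^ (Fintype.card α - 1) := by
        rw [card_univ, Fintype.card_fun, card_subtype_ne_fin' c]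
        congr 1
        have := Fintype.card_subtype_compl (· = y) (α := α)
        simp only [Fintype.card_subtype_eq] at this
        exact this

lemma card_alone_le' (hj2 : 2 ≤ j) (y : α) :
    ((univ : Finset (α → Fin j)).filter fun f => ∀ x, x ≠ y → f x ≠ f y).card
      ≤ j * (j-1) ^ (Fintype.card α - 1) := by
  have hsub : ((univ : Finset (α → Fin j)).filter fun f => ∀ x, x ≠ y → f x ≠ f y)
      ⊆ (univ : Finset (Fin j)).biUnion (fun c =>
          (univ : Finset (α → Fin j)).filter fun f => f y = c ∧ ∀ x, x ≠ y → f x ≠ c) := by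
    intro f hf
    rw [mem_filter] at hf
    rw [mem_biUnion]
    exact ⟨f y, mem_univ _, by rw [mem_filter]; exact ⟨mem_univ _, rfl, hf.2⟩⟩
  calc _ ≤ _ := Finset.card_le_card hsub
    _ ≤ ∑ c : Fin j, ((univ : Finset (α → Fin j)).filter
          fun f => f y = c ∧ ∀ x, x ≠ y → f x ≠ c).card := Finset.card_biUnion_le
    _ ≤ ∑ _c : Fin j, (j-1)^(Fintype.card α - 1) :=
        Finset.sum_le_sum (fun c _ => card_aloneC_le' hj2 y c)
    _ = j * (j-1)^(Fintype.card α - 1) := by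
        rw [Finset.sum_const, card_univ, Fintype.card_fin, smul_eq_mul]

lemma card_notsurj_le' (hj2 : 2 ≤ j) :
    ((univ : Finset (α → Fin j)).filter fun f => ¬ Function.Surjective f).card
      ≤ j * (j-1) ^ Fintype.card α := by
  have hsub : ((univ : Finset (α → Fin j)).filter fun f => ¬ Function.Surjective f)
      ⊆ (univ : Finset (Fin j)).biUnion (fun c =>
          (univ : Finset (α → Fin j)).filter fun f => ∀ x, f x ≠ c) := by
    intro f hf
    rw [mem_filter] at hf
    have := hf.2
    rw [Function.Surjective] at this
    push_neg at this
    obtain ⟨c, hc⟩ := this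
    rw [mem_biUnion]
    exact ⟨c, mem_univ _, by rw [mem_filter]; exact ⟨mem_univ _, hc⟩⟩
  calc _ ≤ _ := Finset.card_le_card hsub
    _ ≤ ∑ c : Fin j, ((univ : Finset (α → Fin j)).filter
          fun f => ∀ x, f x ≠ c).card := Finset.card_biUnion_le
    _ ≤ ∑ _c : Fin j, (j-1)^(Fintype.card α) :=
        Finset.sum_le_sum (fun c _ => card_avoid_le' hj2 c)
    _ = j * (j-1)^(Fintype.card α) := by
        rw [Finset.sum_const, card_univ, Fintype.card_fin, smul_eq_mul]

lemma badfun_card_le' (hj2 : 2 ≤ j) (Z : Finset α) (hZ : Z.card ≤ j) (hm : 1 ≤ Fintype.card α) :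
    ((univ : Finset (α → Fin j)).filter fun f => ¬(Function.Surjective f ∧
        ∀ x : α, x ∈ Z → ∃ x', x' ≠ x ∧ f x' = f x)).card
      ≤ j * (2*j-1) * (j-1) ^ (Fintype.card α - 1) := by
  set m := Fintype.card α with hmdef
  have hsub : ((univ : Finset (α → Fin j)).filter fun f => ¬(Function.Surjective f ∧
      ∀ x : α, x ∈ Z → ∃ x', x' ≠ x ∧ f x' = f x))
      ⊆ ((univ : Finset (α → Fin j)).filter fun f => ¬ Function.Surjective f)
        ∪ Z.biUnion (fun y =>
            (univ : Finset (α → Fin j)).filter fun f => ∀ x, x ≠ y → f x ≠ f y) := by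
    intro f hf
    rw [mem_filter] at hf
    rw [mem_union]
    by_cases hS : Function.Surjective f
    · right
      have hx : ∃ x : α, x ∈ Z ∧ ∀ x', x' ≠ x → f x' ≠ f x := by
        by_contra hc
        push_neg at hc
        apply hf.2
        refine ⟨hS, fun x hxY => ?_⟩
        obtain ⟨x', hx1, hx2⟩ := hc x hxY
        exact ⟨x', hx1, hx2⟩
      obtain ⟨x, hxZ, hxA⟩ := hx
      rw [mem_biUnion]
      exact ⟨x, hxZ, by rw [mem_filter]; exact ⟨mem_univ _, hxA⟩⟩
    · left
      rw [mem_filter]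
      exact ⟨mem_univ _, hS⟩
  calc _ ≤ _ := Finset.card_le_card hsub
    _ ≤ _ := Finset.card_union_le _ _
    _ ≤ j * (j-1)^m + j * (j * (j-1)^(m-1)) := by
        apply Nat.add_le_add (card_notsurj_le' hj2)
        calc (Z.biUnion fun y => (univ : Finset (α → Fin j)).filter
              fun f => ∀ x, x ≠ y → f x ≠ f y).card
            ≤ ∑ y ∈ Z, ((univ : Finset (α → Fin j)).filter
                fun f => ∀ x, x ≠ y → f x ≠ f y).card := Finset.card_biUnion_le
          _ ≤ ∑ _y ∈ Z, j * (j-1)^(m-1) := Finset.sum_le_sum (fun y _ => card_alone_le' hj2 y)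
          _ = Z.card * (j * (j-1)^(m-1)) := by rw [Finset.sum_const, smul_eq_mul]
          _ ≤ j * (j * (j-1)^(m-1)) := Nat.mul_le_mul_right _ hZ
    _ = j * (2*j-1) * (j-1) ^ (m-1) := by
        have h1 : (j-1)^m = (j-1)^(m-1) * (j-1) := by
          rw [← pow_succ]
          congr 1
          omega
        have h2 : 2*j-1 = (j-1) + j := by omega
        rw [h1, h2]
        ring

end FunCount

variable {n j : ℕ}

def blockOf {n : ℕ} (X : Finset (Fin n)) (j : ℕ) (f : ↥X → Fin j) (c : Fin j) :
    Finset (Fin n) :=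
  (Finset.univ.filter fun x : ↥X => f x = c).image Subtype.val

def fibersOf {n : ℕ} (X : Finset (Fin n)) (j : ℕ) (f : ↥X → Fin j) :
    Finset (Finset (Fin n)) :=
  Finset.univ.image (blockOf X j f)

lemma mem_blockOf {X : Finset (Fin n)} {f : ↥X → Fin j} {c : Fin j} {a : Fin n} :
    a ∈ blockOf X j f c ↔ ∃ h : a ∈ X, f ⟨a, h⟩ = c := by
  simp [blockOf, Subtype.exists]

lemma blockOf_subset {X : Finset (Fin n)} {f : ↥X → Fin j} {c : Fin j} :
    blockOf X j f c ⊆ X := by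
  intro a ha
  rw [mem_blockOf] at ha
  exact ha.1

lemma blockOf_injective {X : Finset (Fin n)} {f : ↥X → Fin j}
    (hf : Function.Surjective f) : Function.Injective (blockOf X j f) := by
  intro c c' h
  obtain ⟨x, hx⟩ := hf c
  have hxc : x.1 ∈ blockOf X j f c := mem_blockOf.mpr ⟨x.2, by simpa [Subtype.coe_eta] using hx⟩
  rw [h, mem_blockOf] at hxc
  obtain ⟨h1, h2⟩ := hxc
  rw [← h2, ← hx]

def GoodPart {n : ℕ} (X Y : Finset (Fin n)) (j : ℕ) : Finset (Finset (Finset (Fin n))) :=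
  Finset.univ.filter fun G => G.card = j ∧ (∀ B ∈ G, B.Nonempty) ∧
    (∀ B ∈ G, ∀ C ∈ G, B ≠ C → Disjoint B C) ∧ G.sup id = X ∧ ∀ y ∈ Y, ({y} : Finset (Fin n)) ∉ G

def GoodFun {n : ℕ} (X : Finset (Fin n)) (Z : Finset ↥X) (j : ℕ) : Finset (↥X → Fin j) :=
  Finset.univ.filter fun f => Function.Surjective f ∧
    ∀ x ∈ Z, ∃ x', x' ≠ x ∧ f x' = f x

lemma fibersOf_mem_goodPart {X Y : Finset (Fin n)} {f : ↥X → Fin j}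
    (hf : f ∈ GoodFun X ((univ : Finset ↥X).filter fun x => x.1 ∈ Y) j) :
    fibersOf X j f ∈ GoodPart X Y j := by
  rw [GoodFun, mem_filter] at hf
  obtain ⟨-, hsurj, hgood⟩ := hf
  rw [GoodPart, mem_filter]
  refine ⟨mem_univ _, ?_, ?_, ?_, ?_, ?_⟩
  · rw [fibersOf, Finset.card_image_of_injective _ (blockOf_injective hsurj), card_univ,
      Fintype.card_fin]
  · rintro B hB
    rw [fibersOf, mem_image] at hB
    obtain ⟨c, -, rfl⟩ := hB
    obtain ⟨x, hx⟩ := hsurj c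
    exact ⟨x.1, mem_blockOf.mpr ⟨x.2, by simpa [Subtype.coe_eta] using hx⟩⟩
  · rintro B hB C hC hBC
    rw [fibersOf, mem_image] at hB hC
    obtain ⟨c, -, rfl⟩ := hB
    obtain ⟨c', -, rfl⟩ := hC
    have hcc : c ≠ c' := fun h => hBC (by rw [h])
    rw [Finset.disjoint_left]
    intro a ha ha'
    rw [mem_blockOf] at ha ha'
    obtain ⟨h1, h2⟩ := ha
    obtain ⟨h1', h2'⟩ := ha'
    exact hcc (h2 ▸ h2' ▸ rfl)
  · apply Finset.Subset.antisymm
    · intro a ha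
      rw [Finset.mem_sup] at ha
      obtain ⟨B, hB, haB⟩ := ha
      rw [fibersOf, mem_image] at hB
      obtain ⟨c, -, rfl⟩ := hB
      exact blockOf_subset haB
    · intro a ha
      rw [Finset.mem_sup]
      exact ⟨blockOf X j f (f ⟨a, ha⟩), mem_image_of_mem _ (mem_univ _),
        mem_blockOf.mpr ⟨ha, rfl⟩⟩
  · intro y hy hmem
    rw [fibersOf, mem_image] at hmem
    obtain ⟨c, -, hc⟩ := hmem
    have hy' : y ∈ blockOf X j f c := by rw [hc]; exact mem_singleton_self y
    rw [mem_blockOf] at hy'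
    obtain ⟨hyX, hfy⟩ := hy'
    obtain ⟨x', hx'ne, hx'⟩ := hgood ⟨y, hyX⟩ (by rw [mem_filter]; exact ⟨mem_univ _, hy⟩)
    have : x'.1 ∈ blockOf X j f c := mem_blockOf.mpr ⟨x'.2, by
      simpa [Subtype.coe_eta, hfy] using hx'⟩
    rw [hc, mem_singleton] at this
    exact hx'ne (Subtype.ext this)

lemma blockOf_inj_fun {X : Finset (Fin n)} {f g : ↥X → Fin j}
    (h : blockOf X j f = blockOf X j g) : f = g := by
  funext x
  have hx : x.1 ∈ blockOf X j f (f x) := mem_blockOf.mpr ⟨x.2, by simp [Subtype.coe_eta]⟩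
  rw [h, mem_blockOf] at hx
  obtain ⟨h1, h2⟩ := hx
  rw [← h2]

lemma card_fiber_le {X : Finset (Fin n)} {Z : Finset ↥X} (hj : 0 < j)
    (G₀ : Finset (Finset (Fin n))) (hG₀ : G₀.card = j) :
    ((GoodFun X Z j).filter fun f => fibersOf X j f = G₀).card ≤ j.factorial := by
  have hne : G₀.Nonempty := Finset.card_pos.mp (hG₀ ▸ hj)
  have hinh : ↥G₀ := ⟨hne.choose, hne.choose_spec⟩
  set Φ : (↥X → Fin j) → (Fin j → ↥G₀) := fun f c =>
    if h : blockOf X j f c ∈ G₀ then ⟨blockOf X j f c, h⟩ else hinh with hΦ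
  have hmaps : ∀ f ∈ (GoodFun X Z j).filter fun f => fibersOf X j f = G₀,
      ∀ c, blockOf X j f c ∈ G₀ := by
    intro f hf c
    rw [mem_filter] at hf
    rw [← hf.2]
    exact mem_image_of_mem _ (mem_univ c)
  calc ((GoodFun X Z j).filter fun f => fibersOf X j f = G₀).card
      ≤ ((univ : Finset (Fin j → ↥G₀)).filter Function.Injective).card := by
        apply Finset.card_le_card_of_injOn Φ
        · intro f hf
          rw [mem_coe, mem_filter]
          refine ⟨mem_univ _, ?_⟩
          intro c c' hcc
          have hc := hmaps f hf c
          have hc' := hmaps f hf c'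
          rw [hΦ] at hcc
          simp only [dif_pos hc, dif_pos hc'] at hcc
          have hbl : blockOf X j f c = blockOf X j f c' := congrArg Subtype.val hcc
          have hsurj : Function.Surjective f := by
            rw [mem_coe, mem_filter, GoodFun, mem_filter] at hf
            exact hf.1.2.1
          exact blockOf_injective hsurj hbl
        · intro f hf g hg hfg
          apply blockOf_inj_fun (X := X) (f := f) (g := g)
          funext c
          have hc := hmaps f hf c
          have hc' := hmaps g hg c
          have := congrFun hfg c
          rw [hΦ] at this
          simp only [dif_pos hc, dif_pos hc'] at this
          exact congrArg Subtype.val this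
    _ = Fintype.card {φ : Fin j → ↥G₀ // Function.Injective φ} :=
        (Fintype.card_subtype _).symm
    _ = Fintype.card (Fin j ↪ ↥G₀) :=
        Fintype.card_congr (Equiv.subtypeInjectiveEquivEmbedding _ _)
    _ = j.factorial := by
        rw [Fintype.card_embedding_eq, Fintype.card_fin, Fintype.card_coe, hG₀,
          Nat.descFactorial_self]



lemma goodFun_card_le {X Y : Finset (Fin n)} (hj : 0 < j) :
    (GoodFun X ((univ : Finset ↥X).filter fun x => x.1 ∈ Y) j).card
      ≤ j.factorial * (GoodPart X Y j).card := by
  apply Finset.card_le_mul_card_image_of_maps_to (f := fibersOf X j)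
  · intro f hf
    exact fibersOf_mem_goodPart hf
  · intro G₀ hG₀
    apply card_fiber_le hj
    rw [GoodPart, mem_filter] at hG₀
    exact hG₀.2.1


lemma stirling_le_six_goodPart (hj2 : 2 ≤ j) (X Y : Finset (Fin n)) (hYX : Y ⊆ X)
    (hYj : Y.card ≤ j)
    (hlog : ((j:ℝ)+1) * Real.logb 2 ((j:ℝ)+1) ≤ ((X.card - 1 : ℕ) : ℝ)) :
    stirling X.card j ≤ 6 * (GoodPart X Y j).card := by
  set m := X.card with hmdef
  set Z : Finset ↥X := (univ : Finset ↥X).filter fun x => x.1 ∈ Y with hZdef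
  have hα : Fintype.card ↥X = m := Fintype.card_coe X
  have hm : 1 ≤ m := by
    by_contra h
    have hm0 : m - 1 = 0 := by
      rw [Nat.lt_one_iff.mp (not_le.mp h)]
    rw [hm0] at hlog
    have hpos : 0 < ((j:ℝ)+1) * Real.logb 2 ((j:ℝ)+1) := by
      apply mul_pos (by positivity)
      apply Real.logb_pos (by norm_num)
      have : (2:ℝ) ≤ (j:ℝ) := by exact_mod_cast hj2
      linarith
    norm_num at hlog
    linarith
  have hZ : Z.card ≤ j := by
    apply le_trans _ hYj
    apply Finset.card_le_card_of_injOn Subtype.val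
    · intro x hx
      simp only [hZdef, mem_coe, mem_filter] at hx
      exact hx.2
    · intro x _ y _ h
      exact Subtype.ext h
  have hsplit : (GoodFun X Z j).card
      + ((univ : Finset (↥X → Fin j)).filter fun f => ¬(Function.Surjective f ∧
          ∀ x ∈ Z, ∃ x', x' ≠ x ∧ f x' = f x)).card = j ^ m := by
    rw [GoodFun, Finset.card_filter_add_card_filter_not, card_univ,
      Fintype.card_fun, Fintype.card_fin, hα]
  have hbad : ((univ : Finset (↥X → Fin j)).filter fun f => ¬(Function.Surjective f ∧
      ∀ x ∈ Z, ∃ x', x' ≠ x ∧ f x' = f x)).card ≤ j * (2*j-1) * (j-1)^(m-1) := by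
    have := badfun_card_le' (α := ↥X) hj2 Z hZ (hα ▸ hm)
    rwa [hα] at this
  have hkey : 6*(2*j-1)*(j-1)^(m-1) ≤ 5*j^(m-1) := nat_key j (m-1) hj2 hlog
  have hjm : j * j^(m-1) = j ^ m := by
    rw [← pow_succ']
    rw [Nat.sub_add_cancel hm]
  have h6bad : 6 * (((univ : Finset (↥X → Fin j)).filter fun f => ¬(Function.Surjective f ∧
      ∀ x ∈ Z, ∃ x', x' ≠ x ∧ f x' = f x)).card) ≤ 5 * j ^ m := by
    calc 6 * (((univ : Finset (↥X → Fin j)).filter fun f => ¬(Function.Surjective f ∧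
          ∀ x ∈ Z, ∃ x', x' ≠ x ∧ f x' = f x)).card)
        ≤ 6 * (j * (2*j-1) * (j-1)^(m-1)) := Nat.mul_le_mul_left _ hbad
      _ = j * (6*(2*j-1)*(j-1)^(m-1)) := by ring
      _ ≤ j * (5*j^(m-1)) := Nat.mul_le_mul_left _ hkey
      _ = 5 * (j * j^(m-1)) := by ring
      _ = 5 * j ^ m := by rw [hjm]
  have hgoodlow : j ^ m ≤ 6 * (GoodFun X Z j).card := by
    have e1 : 6 * j ^ m = 6 * (GoodFun X Z j).card
        + 6 * (((univ : Finset (↥X → Fin j)).filter fun f => ¬(Function.Surjective f ∧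
            ∀ x ∈ Z, ∃ x', x' ≠ x ∧ f x' = f x)).card) := by
      rw [← hsplit]; ring
    have e3 : j ^ m + 5 * j ^ m ≤ 6 * (GoodFun X Z j).card + 5 * j ^ m := by
      calc j ^ m + 5 * j ^ m = 6 * j ^ m := by ring
        _ = _ := e1
        _ ≤ 6 * (GoodFun X Z j).card + 5 * j ^ m := Nat.add_le_add_left h6bad _
    exact Nat.le_of_add_le_add_right e3
  have hstir : j.factorial * stirling m j ≤ j ^ m := factorial_mul_stirling_le j m
  have hfin : j.factorial * stirling m j ≤ j.factorial * (6 * (GoodPart X Y j).card) := by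
    calc j.factorial * stirling m j ≤ j ^ m := hstir
      _ ≤ 6 * (GoodFun X Z j).card := hgoodlow
      _ ≤ 6 * (j.factorial * (GoodPart X Y j).card) :=
          Nat.mul_le_mul_left _ (goodFun_card_le (Nat.lt_of_lt_of_le (by norm_num) hj2))
      _ = j.factorial * (6 * (GoodPart X Y j).card) := by ring
  exact Nat.le_of_mul_le_mul_left hfin (Nat.factorial_pos j)

theorem stmt_17 (n k t s : ℕ) (hkt : t + 2 ≤ k) (hs1 : t + 2 ≤ s) (hs2 : s ≤ k)
    (hn : (n : ℝ) ≥ Lfun k t)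
    (M : Finset (Finset (Fin n)))
    (hM : M = (Finset.univ.filter fun i : Fin n => (i : ℕ) < s).image fun i => {i}) :
    ({F : Finset (Finset (Fin n)) | IsKPartition n k F ∧ t ≤ (F ∩ M).card}.ncard : ℝ) ≥
      (1 / 6) * Nat.choose s t * stirling (n - t) (k - t) := by
  have htk : t ≤ k := by omega
  set j := k - t with hjdef
  have hj2 : 2 ≤ j := by omega
  have hcast_kt : ((k:ℝ) - t) = (j:ℝ) := by
    rw [hjdef]
    rw [Nat.cast_sub htk]
  have hjR : (2:ℝ) ≤ (j:ℝ) := by exact_mod_cast hj2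
  have ht0 : (0:ℝ) ≤ (t:ℝ) := Nat.cast_nonneg t
  have hL : Lfun k t = (t:ℝ)+1 + ((j:ℝ)+1) * Real.logb 2 (((t:ℝ)+1)*((j:ℝ)+1)) := by
    rw [Lfun, hcast_kt]
  have hlog32 : (3/2:ℝ) ≤ Real.logb 2 (((t:ℝ)+1)*((j:ℝ)+1)) := by
    have hx3 : (3:ℝ) ≤ ((t:ℝ)+1)*((j:ℝ)+1) := by nlinarith
    rw [Real.le_logb_iff_rpow_le (by norm_num) (by linarith)]
    apply le_of_pow_le_pow_left₀ (n := 2) (by norm_num) (by linarith)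
    have h8 : ((2:ℝ) ^ (3/2:ℝ))^(2:ℕ) = 8 := by
      rw [← Real.rpow_natCast ((2:ℝ)^(3/2:ℝ)) 2, ← Real.rpow_mul (by norm_num)]
      norm_num
    rw [h8]
    nlinarith
  have hnk2 : k + 2 ≤ n := by
    have h1 : (t:ℝ)+1 + ((j:ℝ)+1) * (3/2) ≤ (n:ℝ) := by
      have h2 : ((j:ℝ)+1) * (3/2) ≤ ((j:ℝ)+1) * Real.logb 2 (((t:ℝ)+1)*((j:ℝ)+1)) :=
        mul_le_mul_of_nonneg_left hlog32 (by positivity)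
      rw [hL] at hn
      linarith
    have hkR : (k:ℝ) = (t:ℝ) + (j:ℝ) := by
      rw [hjdef]
      push_cast [htk]
      ring
    have h3 : ((k:ℝ)+2) ≤ (n:ℝ) := by nlinarith
    exact_mod_cast h3
  have htn : t + 1 ≤ n := by omega
  have hsn : s ≤ n := by omega
  have hlogmain : ((j:ℝ)+1) * Real.logb 2 ((j:ℝ)+1) ≤ ((n - t - 1 : ℕ) : ℝ) := by
    have hcast : ((n - t - 1 : ℕ) : ℝ) = (n:ℝ) - t - 1 := by
      have he : n - t - 1 = n - (t+1) := by omega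
      rw [he, Nat.cast_sub htn]
      push_cast
      ring
    rw [hcast]
    have hmono : Real.logb 2 ((j:ℝ)+1) ≤ Real.logb 2 (((t:ℝ)+1)*((j:ℝ)+1)) := by
      apply Real.logb_le_logb_of_le (by norm_num) (by linarith)
      nlinarith
    rw [hL] at hn
    nlinarith [mul_le_mul_of_nonneg_left hmono (show (0:ℝ) ≤ (j:ℝ)+1 by positivity)]
  set S₀ : Finset (Fin n) := Finset.univ.filter (fun i : Fin n => (i:ℕ) < s) with hS₀def
  have hS₀card : S₀.card = s := by
    have hsub : ∀ m ∈ Finset.range s, m < n := fun m hm => by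
      rw [Finset.mem_range] at hm; omega
    have he : S₀ = (Finset.range s).attachFin hsub := by
      ext i
      simp [hS₀def, Finset.mem_attachFin, Finset.mem_range]
    rw [he, Finset.card_attachFin, Finset.card_range]
  have hiS₀lt : ∀ i : Fin n, i ∈ S₀ ↔ (i:ℕ) < s := by
    intro i
    rw [hS₀def, Finset.mem_filter]
    simp
  -- the injection
  set Ψ : (Σ _ : Finset (Fin n), Finset (Finset (Fin n))) → Finset (Finset (Fin n)) :=
    fun p => (p.1.image fun i => ({i} : Finset (Fin n))) ∪ p.2 with hΨdef
  set A : Finset (Σ _ : Finset (Fin n), Finset (Finset (Fin n))) :=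
    (S₀.powersetCard t).sigma
      (fun T => GoodPart ((Finset.univ : Finset (Fin n)) \ T) (S₀ \ T) j) with hAdef
  -- goodness facts
  have hGfacts : ∀ T, ∀ G ∈ GoodPart ((Finset.univ : Finset (Fin n)) \ T) (S₀ \ T) j,
      G.card = j ∧ (∀ B ∈ G, B.Nonempty) ∧ (∀ B ∈ G, ∀ C ∈ G, B ≠ C → Disjoint B C) ∧
      (∀ B ∈ G, B ⊆ Finset.univ \ T) ∧ (∀ y ∈ S₀ \ T, ({y} : Finset (Fin n)) ∉ G) ∧
      G.sup id = Finset.univ \ T := by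
    intro T G hG
    rw [GoodPart, Finset.mem_filter] at hG
    obtain ⟨-, hc, hne, hd, hsup, hnos⟩ := hG
    refine ⟨hc, hne, hd, ?_, hnos, hsup⟩
    intro B hB
    have := Finset.le_sup (f := id) hB
    rw [hsup] at this
    exact this
  have hmemA : ∀ p ∈ A, p.1 ⊆ S₀ ∧ p.1.card = t ∧
      p.2 ∈ GoodPart ((Finset.univ : Finset (Fin n)) \ p.1) (S₀ \ p.1) j := by
    intro p hp
    rw [hAdef, Finset.mem_sigma] at hp
    obtain ⟨h1, h2⟩ := hp
    rw [Finset.mem_powersetCard] at h1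
    exact ⟨h1.1, h1.2, h2⟩
  -- image lands in the target set
  have hmaps : ∀ p ∈ A, IsKPartition n k (Ψ p) ∧ t ≤ ((Ψ p) ∩ M).card := by
    intro p hp
    obtain ⟨hTsub, hTcard, hG⟩ := hmemA p hp
    obtain ⟨hGcard, hGne, hGdisj, hGsub, hGnos, hGsup⟩ := hGfacts p.1 p.2 hG
    have hsingnotG : ∀ i ∈ p.1, ({i} : Finset (Fin n)) ∉ p.2 := by
      intro i hi hmem
      have := hGsub _ hmem (Finset.mem_singleton_self i)
      rw [Finset.mem_sdiff] at this
      exact this.2 hi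
    have hdisjTG : Disjoint (p.1.image fun i => ({i} : Finset (Fin n))) p.2 := by
      rw [Finset.disjoint_left]
      rintro B hB hBG
      rw [Finset.mem_image] at hB
      obtain ⟨i, hi, rfl⟩ := hB
      exact hsingnotG i hi hBG
    have himcard : (p.1.image fun i => ({i} : Finset (Fin n))).card = t := by
      rw [Finset.card_image_of_injective _ Finset.singleton_injective, hTcard]
    constructor
    · refine ⟨?_, ?_, ?_, ?_⟩
      · rw [hΨdef]
        rw [Finset.card_union_of_disjoint hdisjTG, himcard, hGcard]
        omega
      · intro B hB
        rw [hΨdef, Finset.mem_union] at hB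
        rcases hB with h | h
        · rw [Finset.mem_image] at h
          obtain ⟨i, -, rfl⟩ := h
          exact Finset.singleton_nonempty i
        · exact hGne B h
      · intro B hB C hC hBC
        rw [hΨdef, Finset.mem_union] at hB hC
        have hsingT : ∀ D ∈ p.1.image (fun i => ({i} : Finset (Fin n))), ∀ E ∈ p.2,
            Disjoint D E := by
          intro D hD E hE
          rw [Finset.mem_image] at hD
          obtain ⟨i, hi, rfl⟩ := hD
          rw [Finset.disjoint_left]
          intro a ha haE
          rw [Finset.mem_singleton] at ha
          subst ha
          have := hGsub E hE haE
          rw [Finset.mem_sdiff] at this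
          exact this.2 hi
        rcases hB with hB | hB <;> rcases hC with hC | hC
        · obtain ⟨i, hi, rfl⟩ := Finset.mem_image.mp hB
          obtain ⟨i', hi', rfl⟩ := Finset.mem_image.mp hC
          rw [Finset.disjoint_left]
          intro a ha ha'
          rw [Finset.mem_singleton] at ha ha'
          exact hBC (by rw [← ha, ha'])
        · exact hsingT B hB C hC
        · exact (hsingT C hC B hB).symm
        · exact hGdisj B hB C hC hBC
      · rw [hΨdef]
        show ((p.1.image fun i => ({i} : Finset (Fin n))) ∪ p.2).sup id = Finset.univ
        rw [Finset.sup_union]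
        have h1 : (p.1.image fun i => ({i} : Finset (Fin n))).sup id = p.1 := by
          rw [Finset.sup_image]
          ext a
          rw [Finset.mem_sup]
          simp
        rw [h1, hGsup, Finset.sup_eq_union, Finset.union_sdiff_of_subset (Finset.subset_univ _)]
    · have hsubM : p.1.image (fun i => ({i} : Finset (Fin n))) ⊆ (Ψ p) ∩ M := by
        intro B hB
        rw [Finset.mem_inter]
        constructor
        · rw [hΨdef]
          exact Finset.mem_union_left _ hB
        · rw [Finset.mem_image] at hB
          obtain ⟨i, hi, rfl⟩ := hB
          rw [hM]
          exact Finset.mem_image_of_mem _ (hTsub hi)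
      calc t = (p.1.image fun i => ({i} : Finset (Fin n))).card := himcard.symm
        _ ≤ ((Ψ p) ∩ M).card := Finset.card_le_card hsubM
  -- injectivity
  have hinj : Set.InjOn Ψ ↑A := by
    have hTsubT : ∀ p ∈ A, ∀ q ∈ A, Ψ p = Ψ q → p.1 ⊆ q.1 := by
      intro p hp q hq hpq i hi
      obtain ⟨hTsub, hTcard, hG⟩ := hmemA p hp
      obtain ⟨hTsub', hTcard', hG'⟩ := hmemA q hq
      obtain ⟨-, -, -, hGsub', hGnos', -⟩ := hGfacts q.1 q.2 hG'
      have hmem : ({i} : Finset (Fin n)) ∈ Ψ q := by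
        rw [← hpq, hΨdef]
        exact Finset.mem_union_left _ (Finset.mem_image_of_mem _ hi)
      rw [hΨdef, Finset.mem_union] at hmem
      rcases hmem with h | h
      · rw [Finset.mem_image] at h
        obtain ⟨i', hi', he⟩ := h
        rwa [← Finset.singleton_injective he]
      · exfalso
        have hiX := hGsub' _ h (Finset.mem_singleton_self i)
        rw [Finset.mem_sdiff] at hiX
        exact hGnos' i (Finset.mem_sdiff.mpr ⟨hTsub hi, hiX.2⟩) h
    intro p hp q hq hpq
    rw [Finset.mem_coe] at hp hq
    have hT : p.1 = q.1 :=
      Finset.Subset.antisymm (hTsubT p hp q hq hpq) (hTsubT q hq p hp hpq.symm)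
    have hGG : p.2 = q.2 := by
      have hside : ∀ r ∈ A, ∀ w ∈ A, Ψ r = Ψ w → r.1 = w.1 → r.2 ⊆ w.2 := by
        intro r hr w hw hrw hT1 B hB
        obtain ⟨-, -, hGr⟩ := hmemA r hr
        obtain ⟨-, -, hGw⟩ := hmemA w hw
        obtain ⟨-, -, -, hGsubr, -, -⟩ := hGfacts r.1 r.2 hGr
        have hmem : B ∈ Ψ w := by
          rw [← hrw, hΨdef]
          exact Finset.mem_union_right _ hB
        rw [hΨdef, Finset.mem_union] at hmem
        rcases hmem with h | h
        · exfalso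
          rw [Finset.mem_image] at h
          obtain ⟨i, hi, rfl⟩ := h
          have := hGsubr _ hB (Finset.mem_singleton_self i)
          rw [Finset.mem_sdiff] at this
          rw [hT1] at this
          exact this.2 hi
        · exact h
      exact Finset.Subset.antisymm (hside p hp q hq hpq hT) (hside q hq p hp hpq.symm hT.symm)
    obtain ⟨T, G⟩ := p
    obtain ⟨T', G'⟩ := q
    simp only at hT hGG
    subst hT
    rw [hGG]
  -- counting
  have hAcard : A.card = ∑ T ∈ S₀.powersetCard t,
      (GoodPart ((Finset.univ : Finset (Fin n)) \ T) (S₀ \ T) j).card := by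
    rw [hAdef, Finset.card_sigma]
  have hper : ∀ T ∈ S₀.powersetCard t,
      stirling (n - t) j ≤ 6 * (GoodPart ((Finset.univ : Finset (Fin n)) \ T) (S₀ \ T) j).card := by
    intro T hT
    rw [Finset.mem_powersetCard] at hT
    have hXcard : ((Finset.univ : Finset (Fin n)) \ T).card = n - t := by
      rw [Finset.card_sdiff_of_subset (Finset.subset_univ T), Finset.card_univ, Fintype.card_fin, hT.2]
    have hres := stirling_le_six_goodPart hj2 ((Finset.univ : Finset (Fin n)) \ T) (S₀ \ T)
      (Finset.sdiff_subset_sdiff (Finset.subset_univ S₀) (Finset.Subset.refl T))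
      (by rw [Finset.card_sdiff_of_subset hT.1, hS₀card, hT.2]; omega)
      (by rw [hXcard]; exact hlogmain)
    rwa [hXcard] at hres
  have h6A : (Nat.choose s t) * stirling (n - t) j ≤ 6 * A.card := by
    rw [hAcard, Finset.mul_sum]
    calc (Nat.choose s t) * stirling (n - t) j
        = ∑ _T ∈ S₀.powersetCard t, stirling (n - t) j := by
          rw [Finset.sum_const, Finset.card_powersetCard, hS₀card, smul_eq_mul]
      _ ≤ ∑ T ∈ S₀.powersetCard t,
          6 * (GoodPart ((Finset.univ : Finset (Fin n)) \ T) (S₀ \ T) j).card :=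
          Finset.sum_le_sum hper
  have hncard : (A.card : ℝ) ≤
      ({F : Finset (Finset (Fin n)) | IsKPartition n k F ∧ t ≤ (F ∩ M).card}.ncard : ℝ) := by
    have himg : ↑(A.image Ψ) ⊆
        {F : Finset (Finset (Fin n)) | IsKPartition n k F ∧ t ≤ (F ∩ M).card} := by
      intro F hF
      rw [Finset.mem_coe, Finset.mem_image] at hF
      obtain ⟨p, hp, rfl⟩ := hF
      exact hmaps p hp
    have h1 : (A.image Ψ).card ≤
        {F : Finset (Finset (Fin n)) | IsKPartition n k F ∧ t ≤ (F ∩ M).card}.ncard := by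
      rw [← Set.ncard_coe_finset]
      exact Set.ncard_le_ncard himg (Set.toFinite _)
    rw [Finset.card_image_of_injOn hinj] at h1
    exact_mod_cast h1
  have hfin : ((Nat.choose s t * stirling (n - t) j : ℕ) : ℝ) ≤ ((6 * A.card : ℕ) : ℝ) := by
    exact_mod_cast h6A
  push_cast at hfin
  rw [ge_iff_le]
  nlinarith [hncard, hfin]
end

section
/- Let k ≥ t+2 and n ≥ L(k,t) = (t+1) + (k-t+1)·log₂((t+1)(k-t+1)). Then (t+1)·S(n-t,k-t) - t·S(n-t-1,k-t-1) > (t + 3/5)·S(n-t,k-t). -/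
open Finset Real



@[simp] lemma stirling_zero_succ (i : ℕ) : stirling 0 (i+1) = 0 := rfl
@[simp] lemma stirling_succ_zero (n : ℕ) : stirling (n+1) 0 = 0 := rfl
@[simp] lemma stirling_zero_zero : stirling 0 0 = 1 := rfl
lemma stirling_succ (n k : ℕ) : stirling (n+1) (k+1) = stirling n k + (k + 1) * stirling n (k + 1) := rfl

lemma stirling_identity (b : ℕ) : ∀ a : ℕ,
    ∑ i ∈ range (b+1), b.choose i * (i.factorial * stirling a i) = b ^ a := by
  intro a
  induction a with
  | zero =>
    rw [Finset.sum_range_succ']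
    simp
  | succ a ih =>
    rw [Finset.sum_range_succ']
    simp only [stirling_succ_zero, stirling_succ, Nat.choose_zero_right, mul_zero, add_zero,
      Nat.factorial_succ]
    have h1 : ∀ i ∈ range b,
        b.choose (i+1) * ((i+1) * i.factorial * (stirling a i + (i + 1) * stirling a (i+1)))
        = b.choose i * (b - i) * (i.factorial * stirling a i)
          + b.choose (i+1) * ((i+1) * ((i+1) * i.factorial * stirling a (i+1))) := by
      intro i _
      have hc : b.choose (i+1) * (i+1) = b.choose i * (b - i) := Nat.choose_succ_right_eq b i
      calc b.choose (i+1) * ((i+1) * i.factorial * (stirling a i + (i + 1) * stirling a (i+1)))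
          = (b.choose (i+1) * (i+1)) * (i.factorial * stirling a i)
            + b.choose (i+1) * ((i+1) * ((i+1) * i.factorial * stirling a (i+1))) := by ring
        _ = _ := by rw [hc]
    rw [Finset.sum_congr rfl h1, Finset.sum_add_distrib]
    have h2 : ∑ i ∈ range b, b.choose (i+1) * ((i+1) * ((i+1) * i.factorial * stirling a (i+1)))
        = ∑ i ∈ range (b+1), b.choose i * (i * (i.factorial * stirling a i)) := by
      rw [Finset.sum_range_succ']
      simp only [Nat.choose_zero_right, Nat.factorial_succ, Nat.zero_eq, zero_mul, mul_zero, one_mul, add_zero]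
    have h3 : ∑ i ∈ range b, b.choose i * (b - i) * (i.factorial * stirling a i)
        = ∑ i ∈ range (b+1), b.choose i * ((b - i) * (i.factorial * stirling a i)) := by
      rw [Finset.sum_range_succ]
      simp [mul_assoc]
    rw [h2, h3, ← Finset.sum_add_distrib]
    have h4 : ∀ i ∈ range (b+1),
        b.choose i * ((b - i) * (i.factorial * stirling a i))
          + b.choose i * (i * (i.factorial * stirling a i))
        = b * (b.choose i * (i.factorial * stirling a i)) := by
      intro i hi
      have : (b - i) + i = b := Nat.sub_add_cancel (Nat.lt_succ_iff.mp (Finset.mem_range.mp hi))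
      calc _ = ((b - i) + i) * (b.choose i * (i.factorial * stirling a i)) := by ring
        _ = _ := by rw [this]
    rw [Finset.sum_congr rfl h4, ← Finset.mul_sum, ih, pow_succ]
    ring

lemma factorial_stirling_le (a i : ℕ) : i.factorial * stirling a i ≤ i ^ a := by
  have hid := stirling_identity i a
  rw [Finset.sum_range_succ] at hid
  calc i.factorial * stirling a i = i.choose i * (i.factorial * stirling a i) := by
        rw [Nat.choose_self, one_mul]
    _ ≤ _ := Nat.le_add_left _ _
    _ = i ^ a := hid

lemma pow_le_stirling (a j : ℕ) :
    j ^ a ≤ j.factorial * stirling a j + ∑ i ∈ range j, j.choose i * i ^ a := by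
  have hid := stirling_identity j a
  rw [Finset.sum_range_succ, Nat.choose_self, one_mul] at hid
  rw [← hid, add_comm]
  apply Nat.add_le_add_left
  apply Finset.sum_le_sum
  intro i _
  exact Nat.mul_le_mul_left _ (factorial_stirling_le a i)


-- helper: if 2 ≤ c ^ n then 2 ^ (m/n) ≤ c ^ m
lemma rpow_base_le {c : ℝ} {n : ℕ} (hn : 0 < n) (hc : 0 ≤ c) (h : (2:ℝ) ≤ c ^ n) (m : ℕ) :
    (2:ℝ) ^ ((m:ℝ)/(n:ℝ)) ≤ c ^ m := by
  have hn' : ((n:ℝ)) ≠ 0 := by positivity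
  have h1 : (2:ℝ) ^ ((1:ℝ)/(n:ℝ)) ≤ c := by
    have := Real.rpow_le_rpow (by norm_num : (0:ℝ) ≤ 2) h (by positivity : (0:ℝ) ≤ 1/(n:ℝ))
    rwa [← Real.rpow_natCast c n, ← Real.rpow_mul hc, mul_one_div, div_self hn',
      Real.rpow_one] at this
  calc (2:ℝ) ^ ((m:ℝ)/(n:ℝ)) = ((2:ℝ) ^ ((1:ℝ)/(n:ℝ))) ^ m := by
        rw [← Real.rpow_natCast ((2:ℝ) ^ ((1:ℝ)/(n:ℝ))) m, ← Real.rpow_mul (by norm_num),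
          one_div, inv_mul_eq_div]
    _ ≤ c ^ m := pow_le_pow_left₀ (by positivity) h1 m

-- helper: if c ^ n ≤ z, c ≥ 0, then c ≤ z ^ (1/n)
lemma le_rpow_inv {c z : ℝ} (hc : 0 ≤ c) {n : ℕ} (hn : 0 < n) (h : c ^ n ≤ z) :
    c ≤ z ^ ((1:ℝ)/(n:ℝ)) := by
  have hn' : ((n:ℝ)) ≠ 0 := by positivity
  have := Real.rpow_le_rpow (by positivity) h (by positivity : (0:ℝ) ≤ 1/(n:ℝ))
  rwa [← Real.rpow_natCast c n, ← Real.rpow_mul hc, mul_one_div, div_self hn',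
    Real.rpow_one] at this

-- C1 : ((J+2)/J)^j ≤ 2(J+1)
lemma C1 (j : ℕ) (hj : 2 ≤ j) : (((j:ℝ)+2)/(j:ℝ)) ^ j ≤ 2*((j:ℝ)+1) := by
  have hJ0 : (0:ℝ) < (j:ℝ) := by positivity
  have hrw : ((j:ℝ)+2)/(j:ℝ) = 1 + 2/(j:ℝ) := by field_simp
  rcases eq_or_lt_of_le hj with h2 | h3
  · rw [← h2]; norm_num
  · have h3' : (3:ℝ) ≤ (j:ℝ) := by exact_mod_cast h3
    have he : (1 + 2/(j:ℝ)) ^ j ≤ Real.exp 2 := by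
      calc (1 + 2/(j:ℝ)) ^ j ≤ (Real.exp (2/(j:ℝ))) ^ j := by
            apply pow_le_pow_left₀ (by positivity)
            have := Real.add_one_le_exp (2/(j:ℝ)); linarith
        _ = Real.exp ((j:ℝ) * (2/(j:ℝ))) := (Real.exp_nat_mul _ j).symm
        _ = Real.exp 2 := by
            congr 1
            field_simp
    have hexp2 : Real.exp 2 < 8 := by
      have h1 : Real.exp 2 = Real.exp 1 * Real.exp 1 := by
        rw [← Real.exp_add]; norm_num
      nlinarith [Real.exp_one_lt_d9, Real.exp_pos 1]
    rw [hrw]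
    nlinarith

lemma K2 (t j : ℕ) (ht : 1 ≤ t) (hj : 2 ≤ j) :
    ((j:ℝ)+2)/(j:ℝ) ≤ (((t:ℝ)+1)*((j:ℝ)+1)) ^ ((1:ℝ)/(j:ℝ)) := by
  have hj0 : 0 < j := by omega
  apply le_rpow_inv (by positivity) hj0
  have hT : (2:ℝ) ≤ (t:ℝ)+1 := by
    have : (1:ℝ) ≤ (t:ℝ) := by exact_mod_cast ht
    linarith
  calc (((j:ℝ)+2)/(j:ℝ)) ^ j ≤ 2*((j:ℝ)+1) := C1 j hj
    _ ≤ ((t:ℝ)+1)*((j:ℝ)+1) := by nlinarith [show (0:ℝ) < (j:ℝ)+1 by positivity]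

lemma K1 (t j m : ℕ) (hj : 2 ≤ j)
    (hm : ((j:ℝ)+1) * Real.logb 2 (((t:ℝ)+1)*((j:ℝ)+1)) ≤ (m:ℝ)) :
    ((j:ℝ)-1)^m * ((((t:ℝ)+1)*((j:ℝ)+1)) *
      ((((t:ℝ)+1)*((j:ℝ)+1)) ^ ((1:ℝ)/(j:ℝ)))) ≤ (j:ℝ)^m := by
  have hj0 : 0 < j := by omega
  have hJ2 : (2:ℝ) ≤ (j:ℝ) := by exact_mod_cast hj
  have hJ1 : (0:ℝ) < (j:ℝ) - 1 := by linarith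
  have hx : (0:ℝ) < ((t:ℝ)+1)*((j:ℝ)+1) := by positivity
  set L := Real.logb 2 (((t:ℝ)+1)*((j:ℝ)+1)) with hL
  set c : ℝ := (j:ℝ)/((j:ℝ)-1) with hc
  have hcnn : (0:ℝ) ≤ c := by positivity
  have hcrw : c = 1 + 1/((j:ℝ)-1) := by rw [hc]; field_simp; ring
  -- (1) c^j ≥ 2
  have h2c : (2:ℝ) ≤ c ^ j := by
    rw [hcrw]
    have hber := one_add_mul_le_pow (show (-2:ℝ) ≤ 1/((j:ℝ)-1) by have := le_of_lt (one_div_pos.mpr hJ1); linarith) j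
    have : (1:ℝ) ≤ (j:ℝ) * (1/((j:ℝ)-1)) := by
      rw [mul_one_div, le_div_iff₀ hJ1]; linarith
    linarith
  -- (2) 2^(m/j) ≤ c^m
  have h3 := rpow_base_le hj0 hcnn h2c m
  -- (3) x^((j+1)/j) ≤ 2^(m/j)
  have h4 : (((t:ℝ)+1)*((j:ℝ)+1)) * ((((t:ℝ)+1)*((j:ℝ)+1)) ^ ((1:ℝ)/(j:ℝ)))
      ≤ (2:ℝ) ^ ((m:ℝ)/(j:ℝ)) := by
    have hxpow : (((t:ℝ)+1)*((j:ℝ)+1)) * ((((t:ℝ)+1)*((j:ℝ)+1)) ^ ((1:ℝ)/(j:ℝ)))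
        = (2:ℝ) ^ (L * (1 + 1/(j:ℝ))) := by
      rw [Real.rpow_mul (by norm_num : (0:ℝ) ≤ 2), Real.rpow_logb (by norm_num) (by norm_num) hx,
        Real.rpow_add hx, Real.rpow_one]
    rw [hxpow]
    apply Real.rpow_le_rpow_left_iff (by norm_num : (1:ℝ) < 2) |>.mpr
    have hj0' : (0:ℝ) < (j:ℝ) := by positivity
    rw [le_div_iff₀ hj0']
    have heq : L * (1 + 1/(j:ℝ)) * (j:ℝ) = ((j:ℝ)+1) * L := by field_simp
    rw [heq]
    exact hm
  calc ((j:ℝ)-1)^m * ((((t:ℝ)+1)*((j:ℝ)+1)) * ((((t:ℝ)+1)*((j:ℝ)+1)) ^ ((1:ℝ)/(j:ℝ))))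
      ≤ ((j:ℝ)-1)^m * ((2:ℝ) ^ ((m:ℝ)/(j:ℝ))) := by
        apply mul_le_mul_of_nonneg_left h4 (by positivity)
    _ ≤ ((j:ℝ)-1)^m * c^m := mul_le_mul_of_nonneg_left h3 (by positivity)
    _ = (j:ℝ)^m := by
        rw [← mul_pow]
        congr 1
        rw [hc]
        field_simp

lemma K3 (t j m : ℕ) (ht : 1 ≤ t) (hj : 2 ≤ j) (hm1 : 1 ≤ m)
    (hm : ((j:ℝ)+1) * Real.logb 2 (((t:ℝ)+1)*((j:ℝ)+1)) ≤ (m:ℝ)) :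
    ∑ i ∈ range j, (j.choose i : ℝ) * (i:ℝ)^m ≤ 2*(j:ℝ)*((j:ℝ)-1)^m := by
  have hJ2 : (2:ℝ) ≤ (j:ℝ) := by exact_mod_cast hj
  have hJ1 : (0:ℝ) < (j:ℝ) - 1 := by linarith
  have hT1 : (1:ℝ) ≤ (t:ℝ) := by exact_mod_cast ht
  set L := Real.logb 2 (((t:ℝ)+1)*((j:ℝ)+1)) with hLdef
  have hlogJnn : (0:ℝ) ≤ Real.logb 2 (j:ℝ) := Real.logb_nonneg (by norm_num) (by linarith)
  have hLlow : 1 + Real.logb 2 (j:ℝ) ≤ L := by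
    have h1 : Real.logb 2 (2*(j:ℝ)) ≤ L := by
      rw [hLdef]
      apply Real.logb_le_logb_of_le (by norm_num : (1:ℝ) < 2) (by positivity)
      nlinarith
    have h2 : Real.logb 2 (2*(j:ℝ)) = 1 + Real.logb 2 (j:ℝ) := by
      rw [Real.logb_mul (by norm_num) (by positivity),
        Real.logb_self_eq_one (by norm_num : (1:ℝ) < 2)]
    linarith
  have hdiv : 1 + Real.logb 2 (j:ℝ) ≤ (m:ℝ)/((j:ℝ)-1) := by
    rw [le_div_iff₀ hJ1]
    have : ((j:ℝ)-1) * (1 + Real.logb 2 (j:ℝ)) ≤ ((j:ℝ)+1) * L := by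
      have := mul_le_mul_of_nonneg_left hLlow (show (0:ℝ) ≤ (j:ℝ)+1 by linarith)
      nlinarith
    nlinarith
  have h2J : (2:ℝ)*(j:ℝ) ≤ (2:ℝ) ^ ((m:ℝ)/((j:ℝ)-1)) := by
    have : (2:ℝ)*(j:ℝ) = (2:ℝ) ^ ((1:ℝ) + Real.logb 2 (j:ℝ)) := by
      rw [Real.rpow_add (by norm_num), Real.rpow_one,
        Real.rpow_logb (by norm_num) (by norm_num) (by linarith)]
    rw [this]
    exact (Real.rpow_le_rpow_left_iff (by norm_num : (1:ℝ) < 2)).mpr hdiv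
  -- key2
  have key2 : ∀ i : ℕ, 1 ≤ i → i + 2 ≤ j → 2*(j:ℝ) * (i:ℝ)^m ≤ ((i:ℝ)+1)^m := by
    intro i hi hij
    have hj3 : 3 ≤ j := by omega
    have hJ3 : (3:ℝ) ≤ (j:ℝ) := by exact_mod_cast hj3
    have hJ20 : (0:ℝ) < (j:ℝ) - 2 := by linarith
    have hi0 : (0:ℝ) < (i:ℝ) := by exact_mod_cast hi
    have hiJ : (i:ℝ) ≤ (j:ℝ) - 2 := by
      have : (i:ℝ) + 2 ≤ (j:ℝ) := by exact_mod_cast hij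
      linarith
    set b : ℝ := ((j:ℝ)-1)/((j:ℝ)-2) with hb
    have hbnn : (0:ℝ) ≤ b := by positivity
    have hdd : (((j-1:ℕ)):ℝ) = (j:ℝ)-1 := by
      push_cast [Nat.cast_sub (by omega : 1 ≤ j)]; ring
    have h2b : (2:ℝ) ≤ b ^ (j-1) := by
      have hbrw : b = 1 + 1/((j:ℝ)-2) := by rw [hb]; field_simp; ring
      rw [hbrw]
      have hber := one_add_mul_le_pow
        (show (-2:ℝ) ≤ 1/((j:ℝ)-2) by have := le_of_lt (one_div_pos.mpr hJ20); linarith) (j-1)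
      have : (1:ℝ) ≤ ((j-1:ℕ):ℝ) * (1/((j:ℝ)-2)) := by
        rw [hdd, mul_one_div, le_div_iff₀ hJ20]; linarith
      linarith
    have h3 := rpow_base_le (show 0 < j - 1 by omega) hbnn h2b m
    rw [hdd] at h3
    have hcb : b ≤ ((i:ℝ)+1)/(i:ℝ) := by
      rw [hb, div_le_div_iff₀ hJ20 hi0]
      nlinarith
    have hcm : (2:ℝ)*(j:ℝ) ≤ (((i:ℝ)+1)/(i:ℝ))^m := by
      calc (2:ℝ)*(j:ℝ) ≤ (2:ℝ) ^ ((m:ℝ)/((j:ℝ)-1)) := h2J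
        _ ≤ b ^ m := h3
        _ ≤ (((i:ℝ)+1)/(i:ℝ))^m := pow_le_pow_left₀ hbnn hcb m
    have hsplit : ((i:ℝ)+1)^m = (((i:ℝ)+1)/(i:ℝ))^m * (i:ℝ)^m := by
      rw [← mul_pow]
      congr 1
      field_simp
    rw [hsplit]
    exact mul_le_mul_of_nonneg_right hcm (by positivity)
  -- C2
  have C2 : ∀ d i : ℕ, 1 ≤ i → i + d = j - 1 → (i:ℝ)^m * (2*(j:ℝ))^d ≤ ((j:ℝ)-1)^m := by
    intro d
    induction d with
    | zero =>
      intro i hi hij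
      have : (i:ℝ) = (j:ℝ)-1 := by
        have : i = j - 1 := by omega
        subst this
        push_cast [Nat.cast_sub (by omega : 1 ≤ j)]; ring
      rw [pow_zero, mul_one, this]
    | succ d ih =>
      intro i hi hij
      have hkey := key2 i hi (by omega)
      have hprev := ih (i+1) (by omega) (by omega)
      push_cast at hprev
      calc (i:ℝ)^m * (2*(j:ℝ))^(d+1) = (2*(j:ℝ) * (i:ℝ)^m) * (2*(j:ℝ))^d := by ring
        _ ≤ ((i:ℝ)+1)^m * (2*(j:ℝ))^d :=
            mul_le_mul_of_nonneg_right hkey (by positivity)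
        _ ≤ ((j:ℝ)-1)^m := hprev
  -- per-term bound
  have hterm : ∀ i ∈ range j, (j.choose i : ℝ) * (i:ℝ)^m
      ≤ ((j:ℝ)*((j:ℝ)-1)^m) * ((1/2:ℝ))^(j-1-i) := by
    intro i hi
    have hij : i < j := Finset.mem_range.mp hi
    rcases Nat.eq_zero_or_pos i with h0 | h1
    · subst h0
      rw [Nat.cast_zero, zero_pow (by omega : m ≠ 0), mul_zero]
      positivity
    · have hd1 : j - i = (j - 1 - i) + 1 := by omega
      have hchoose : (j.choose i : ℝ) ≤ (j:ℝ)^(j-i) := by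
        have h1' : j.choose (j - i) = j.choose i := Nat.choose_symm (le_of_lt hij)
        rw [← h1']
        calc (j.choose (j-i) : ℝ) ≤ (j:ℝ)^(j-i) / ((j-i).factorial : ℝ) :=
              Nat.choose_le_pow_div (j-i) j
          _ ≤ (j:ℝ)^(j-i) := by
              apply div_le_self (by positivity)
              exact_mod_cast Nat.one_le_iff_ne_zero.mpr (Nat.factorial_ne_zero _)
      have hC2 := C2 (j-1-i) i h1 (by omega)
      have hpow : (j:ℝ)^(j-i) = ((j:ℝ) * ((1/2:ℝ))^(j-1-i)) * (2*(j:ℝ))^(j-1-i) := by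
        have hhalf : ((1/2:ℝ))^(j-1-i) * (2*(j:ℝ))^(j-1-i) = (j:ℝ)^(j-1-i) := by
          rw [← mul_pow]
          congr 1
          ring
        rw [hd1, pow_succ, ← hhalf]
        ring
      calc (j.choose i : ℝ) * (i:ℝ)^m ≤ (j:ℝ)^(j-i) * (i:ℝ)^m :=
            mul_le_mul_of_nonneg_right hchoose (by positivity)
        _ = ((j:ℝ) * ((1/2:ℝ))^(j-1-i)) * ((i:ℝ)^m * (2*(j:ℝ))^(j-1-i)) := by
            rw [hpow]; ring
        _ ≤ ((j:ℝ) * ((1/2:ℝ))^(j-1-i)) * ((j:ℝ)-1)^m :=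
            mul_le_mul_of_nonneg_left hC2 (by positivity)
        _ = ((j:ℝ)*((j:ℝ)-1)^m) * ((1/2:ℝ))^(j-1-i) := by ring
  calc ∑ i ∈ range j, (j.choose i : ℝ) * (i:ℝ)^m
      ≤ ∑ i ∈ range j, ((j:ℝ)*((j:ℝ)-1)^m) * ((1/2:ℝ))^(j-1-i) := Finset.sum_le_sum hterm
    _ = ((j:ℝ)*((j:ℝ)-1)^m) * ∑ i ∈ range j, ((1/2:ℝ))^(j-1-i) := by rw [← Finset.mul_sum]
    _ = ((j:ℝ)*((j:ℝ)-1)^m) * ∑ i ∈ range j, ((1/2:ℝ))^i := by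
        rw [Finset.sum_range_reflect (fun i => ((1/2:ℝ))^i) j]
    _ ≤ ((j:ℝ)*((j:ℝ)-1)^m) * 2 := by
        apply mul_le_mul_of_nonneg_left (sum_geometric_two_le j) (by positivity)
    _ = 2*(j:ℝ)*((j:ℝ)-1)^m := by ring

lemma K4 (T J A : ℝ) (hT : 1 ≤ T) (hJ : 2 ≤ J) (hA : (J+2)/J ≤ A) :
    (5/2)*T*J + 2*J*(J-1) < (J-1)*(((T+1)*(J+1))*A) := by
  have hJ0 : (0:ℝ) < J := by linarith
  have hAJ : J + 2 ≤ A*J := by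
    rw [div_le_iff₀ hJ0] at hA; linarith
  have hc : (0:ℝ) ≤ (J-1)*(T+1)*(J+1) := by
    apply mul_nonneg (mul_nonneg (by linarith) (by linarith)) (by linarith)
  have h5 : (J-1)*(T+1)*(J+1)*(J+2) ≤ (J-1)*(T+1)*(J+1)*(A*J) :=
    mul_le_mul_of_nonneg_left hAJ hc
  have h6 : (0:ℝ) ≤ (T-1)*(2*J^3-J^2-2*J-4) := by
    apply mul_nonneg (by linarith)
    nlinarith [sq_nonneg (J-2), sq_nonneg J]
  have h7 : (0:ℝ) < 7*J^2-4*J-8 := by nlinarith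
  nlinarith [h5, h6, h7, hJ0]


theorem stmt_18 (n k t : ℕ) (ht : 1 ≤ t) (hkt : t + 2 ≤ k)
    (hn : (n : ℝ) ≥ Lfun k t) :
    ((t : ℝ) + 1) * stirling (n - t) (k - t) - t * stirling (n - t - 1) (k - t - 1) >
      ((t : ℝ) + 3 / 5) * stirling (n - t) (k - t) := by
  have hT1 : (1:ℝ) ≤ (t:ℝ) := by exact_mod_cast ht
  set j := k - t with hjdef
  set m := n - t with hmdef
  have hj2 : 2 ≤ j := by omega
  have hJ2 : (2:ℝ) ≤ (j:ℝ) := by exact_mod_cast hj2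
  have hJ1 : (0:ℝ) < (j:ℝ) - 1 := by linarith
  have hkR : (k:ℝ) - (t:ℝ) = (j:ℝ) := by
    rw [hjdef, Nat.cast_sub (by omega : t ≤ k)]
  unfold Lfun at hn
  rw [hkR] at hn
  set L := Real.logb 2 (((t:ℝ)+1)*((j:ℝ)+1)) with hLdef
  have hx : (0:ℝ) < ((t:ℝ)+1)*((j:ℝ)+1) := by positivity
  have hL2 : (2:ℝ) ≤ L := by
    rw [hLdef, Real.le_logb_iff_rpow_le (by norm_num : (1:ℝ) < 2) hx]
    have h4 : (2:ℝ)^(2:ℝ) = 4 := by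
      rw [show (2:ℝ) = ((2:ℕ):ℝ) by norm_num, Real.rpow_natCast]
      norm_num
    rw [h4]
    nlinarith
  have hn7 : (t:ℝ) + 7 ≤ (n:ℝ) := by nlinarith
  have hnt : t + 7 ≤ n := by exact_mod_cast hn7
  have hm7 : 7 ≤ m := by omega
  have hm1 : 1 ≤ m := by omega
  have hMcast : ((m:ℕ):ℝ) = (n:ℝ) - t := by
    rw [hmdef, Nat.cast_sub (by omega : t ≤ n)]
  have hm' : ((j:ℝ)+1)*L ≤ (m:ℝ) := by rw [hMcast]; linarith
  have hJ1cast : ((j-1:ℕ):ℝ) = (j:ℝ) - 1 := by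
    rw [Nat.cast_sub (by omega : 1 ≤ j)]; norm_num
  -- upper bound
  have hupN := factorial_stirling_le (m-1) (j-1)
  have hup : ((j-1).factorial : ℝ) * (stirling (m-1) (j-1) : ℝ) ≤ ((j:ℝ)-1)^(m-1) := by
    have h := (Nat.cast_le (α := ℝ)).mpr hupN
    push_cast at h
    rwa [hJ1cast] at h
  -- lower bound
  have hlowN := pow_le_stirling m j
  have hlow : (j:ℝ)^m ≤ (j.factorial : ℝ) * (stirling m j : ℝ)
      + ∑ i ∈ range j, (j.choose i : ℝ) * (i:ℝ)^m := by
    have h := (Nat.cast_le (α := ℝ)).mpr hlowN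
    push_cast at h
    exact h
  have htail := K3 t j m ht hj2 hm1 hm'
  have hK1 := K1 t j m hj2 hm'
  set A : ℝ := (((t:ℝ)+1)*((j:ℝ)+1)) ^ ((1:ℝ)/(j:ℝ)) with hAdef
  have hK2 : ((j:ℝ)+2)/(j:ℝ) ≤ A := K2 t j ht hj2
  have hK4 := K4 (t:ℝ) (j:ℝ) A hT1 hJ2 hK2
  have hpowsplit : ((j:ℝ)-1)^m = ((j:ℝ)-1)^(m-1) * ((j:ℝ)-1) := by
    conv_lhs => rw [show m = (m-1)+1 by omega]
    rw [pow_succ]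
  have hchain : (5/2)*(t:ℝ)*(j:ℝ)*((j:ℝ)-1)^(m-1) + 2*(j:ℝ)*((j:ℝ)-1)^m < (j:ℝ)^m := by
    have h1 : ((j:ℝ)-1)^(m-1) * ((5/2)*(t:ℝ)*(j:ℝ) + 2*(j:ℝ)*((j:ℝ)-1))
        < ((j:ℝ)-1)^(m-1) * (((j:ℝ)-1)*((((t:ℝ)+1)*((j:ℝ)+1))*A)) :=
      mul_lt_mul_of_pos_left hK4 (pow_pos hJ1 _)
    have h2 : ((j:ℝ)-1)^(m-1) * (((j:ℝ)-1)*((((t:ℝ)+1)*((j:ℝ)+1))*A))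
        = ((j:ℝ)-1)^m * ((((t:ℝ)+1)*((j:ℝ)+1))*A) := by
      rw [hpowsplit]; ring
    have h3 : (5/2)*(t:ℝ)*(j:ℝ)*((j:ℝ)-1)^(m-1) + 2*(j:ℝ)*((j:ℝ)-1)^m
        = ((j:ℝ)-1)^(m-1) * ((5/2)*(t:ℝ)*(j:ℝ) + 2*(j:ℝ)*((j:ℝ)-1)) := by
      rw [hpowsplit]; ring
    rw [h3]
    calc ((j:ℝ)-1)^(m-1) * ((5/2)*(t:ℝ)*(j:ℝ) + 2*(j:ℝ)*((j:ℝ)-1))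
        < ((j:ℝ)-1)^m * ((((t:ℝ)+1)*((j:ℝ)+1))*A) := by rw [← h2]; exact h1
      _ ≤ (j:ℝ)^m := hK1
  -- combine
  have hfacteq : (j.factorial : ℝ) = (j:ℝ) * ((j-1).factorial : ℝ) := by
    conv_lhs => rw [show j = (j-1)+1 by omega]
    rw [Nat.factorial_succ]
    push_cast
    rw [hJ1cast]
    ring
  have hF : (0:ℝ) < ((j-1).factorial : ℝ) := by
    exact_mod_cast Nat.factorial_pos (j-1)
  have hJ0 : (0:ℝ) < (j:ℝ) := by linarith
  have hSm : (j:ℝ)^m - 2*(j:ℝ)*((j:ℝ)-1)^m ≤ (j.factorial : ℝ) * (stirling m j : ℝ) := by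
    linarith
  have hmain : (j:ℝ) * (((j-1).factorial : ℝ) * ((5/2)*(t:ℝ)*(stirling (m-1) (j-1) : ℝ)))
      < (j:ℝ) * (((j-1).factorial : ℝ) * (stirling m j : ℝ)) := by
    have hr1 : (5/2)*(t:ℝ)*(j:ℝ)*(((j-1).factorial : ℝ) * (stirling (m-1) (j-1) : ℝ))
        ≤ (5/2)*(t:ℝ)*(j:ℝ)*((j:ℝ)-1)^(m-1) := by
      apply mul_le_mul_of_nonneg_left hup
      positivity
    have h2 : (5/2)*(t:ℝ)*(j:ℝ)*((j:ℝ)-1)^(m-1) < (j.factorial : ℝ) * (stirling m j : ℝ) := by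
      have hpos : (0:ℝ) ≤ 2*(j:ℝ)*((j:ℝ)-1)^m := by positivity
      linarith
    rw [hfacteq] at h2
    calc (j:ℝ) * (((j-1).factorial : ℝ) * ((5/2)*(t:ℝ)*(stirling (m-1) (j-1) : ℝ)))
        = (5/2)*(t:ℝ)*(j:ℝ)*(((j-1).factorial : ℝ) * (stirling (m-1) (j-1) : ℝ)) := by ring
      _ ≤ (5/2)*(t:ℝ)*(j:ℝ)*((j:ℝ)-1)^(m-1) := hr1
      _ < (j:ℝ) * (((j-1).factorial : ℝ) * (stirling m j : ℝ)) := by rw [← mul_assoc]; exact h2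
  have hdiv : (5/2)*(t:ℝ)*(stirling (m-1) (j-1) : ℝ) < (stirling m j : ℝ) := by
    have hJF : (0:ℝ) < (j:ℝ) * ((j-1).factorial : ℝ) := by positivity
    have := (mul_lt_mul_iff_right₀ hJF).mp (by
      calc ((j:ℝ) * ((j-1).factorial : ℝ)) * ((5/2)*(t:ℝ)*(stirling (m-1) (j-1) : ℝ))
          = (j:ℝ) * (((j-1).factorial : ℝ) * ((5/2)*(t:ℝ)*(stirling (m-1) (j-1) : ℝ))) := by ring
        _ < (j:ℝ) * (((j-1).factorial : ℝ) * (stirling m j : ℝ)) := hmain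
        _ = ((j:ℝ) * ((j-1).factorial : ℝ)) * (stirling m j : ℝ) := by ring)
    exact this
  linarith
end
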